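/- Let u : ℝ² → ℝ be a Schwartz function and let V be a Schwartz function with ∂_x V = ∂_y u (so that V = ∂_x^{-1} ∂_y u). Then for every p with 2 ≤ p ≤ 6 there is a constant C = C_p > 0, independent of u, such that ‖u‖_{L^p(ℝ²)} ≤ C ‖u‖_{L²(ℝ²)}^{(6-p)/(2p)} · ‖∂_x u‖_{L²(ℝ²)}^{(p-2)/p} · ‖V‖_{L²(ℝ²)}^{(p-2)/(2p)}. -/

import Mathlib

open MeasureTheory SchwartzMap

noncomputable section

namespace AnisoAux

open Filter Set

/-- partial derivative on Schwartz space (replacement for the removed Mathlib definition). -/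
def pderivCLM (_ : Type) (m : ℝ × ℝ) : 𝓢(ℝ × ℝ, ℝ) →L[ℝ] 𝓢(ℝ × ℝ, ℝ) :=
  LineDeriv.lineDerivOpCLM ℝ 𝓢(ℝ × ℝ, ℝ) m

lemma pderivCLM_apply (K : Type) (m : ℝ × ℝ) (f : 𝓢(ℝ × ℝ, ℝ)) (x : ℝ × ℝ) :
    pderivCLM K m f x = fderiv ℝ f x m := rfl

/-- decay bound for Schwartz functions on ℝ². -/
lemma schwartz_decay (f : 𝓢(ℝ × ℝ, ℝ)) :
    ∃ D : ℝ, 0 ≤ D ∧ ∀ x y : ℝ, |f (x, y)| ≤ D * ((1 + x^2)⁻¹ * (1 + y^2)⁻¹) := by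
  obtain ⟨C0, -, hC0⟩ := f.decay 0 0
  obtain ⟨C2, -, hC2⟩ := f.decay 2 0
  obtain ⟨C4, -, hC4⟩ := f.decay 4 0
  simp only [pow_zero, one_mul, norm_iteratedFDeriv_zero] at hC0 hC2 hC4
  have hC0' : 0 ≤ C0 := le_trans (norm_nonneg _) (hC0 0)
  have hC2' : 0 ≤ C2 := by simpa using hC2 0
  have hC4' : 0 ≤ C4 := by simpa using hC4 0
  refine ⟨C0 + 2*C2 + C4, by linarith, fun x y => ?_⟩
  have hx : |x| ≤ ‖((x:ℝ), (y:ℝ))‖ := norm_fst_le (x, y)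
  have hy : |y| ≤ ‖((x:ℝ), (y:ℝ))‖ := norm_snd_le (x, y)
  have hnn : (0:ℝ) ≤ ‖((x:ℝ), (y:ℝ))‖ := norm_nonneg _
  have e0 : |f (x, y)| ≤ C0 := by
    have := hC0 (x, y); rwa [Real.norm_eq_abs] at this
  have habs : (0:ℝ) ≤ |f (x, y)| := abs_nonneg _
  have e2x : x^2 * |f (x, y)| ≤ C2 := by
    have h1 : x^2 ≤ ‖((x:ℝ), (y:ℝ))‖^2 := by
      rw [← sq_abs]; exact pow_le_pow_left₀ (abs_nonneg x) hx 2
    have := hC2 (x, y); rw [Real.norm_eq_abs] at this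
    nlinarith
  have e2y : y^2 * |f (x, y)| ≤ C2 := by
    have h1 : y^2 ≤ ‖((x:ℝ), (y:ℝ))‖^2 := by
      rw [← sq_abs]; exact pow_le_pow_left₀ (abs_nonneg y) hy 2
    have := hC2 (x, y); rw [Real.norm_eq_abs] at this
    nlinarith
  have e4 : x^2 * y^2 * |f (x, y)| ≤ C4 := by
    have h1 : x^2 * y^2 ≤ ‖((x:ℝ), (y:ℝ))‖^4 := by
      have hx2 : x^2 ≤ ‖((x:ℝ), (y:ℝ))‖^2 := by
        rw [← sq_abs]; exact pow_le_pow_left₀ (abs_nonneg x) hx 2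
      have hy2 : y^2 ≤ ‖((x:ℝ), (y:ℝ))‖^2 := by
        rw [← sq_abs]; exact pow_le_pow_left₀ (abs_nonneg y) hy 2
      calc x^2 * y^2 ≤ ‖((x:ℝ), (y:ℝ))‖^2 * ‖((x:ℝ), (y:ℝ))‖^2 := by
            apply mul_le_mul hx2 hy2 (sq_nonneg y) (by positivity)
        _ = ‖((x:ℝ), (y:ℝ))‖^4 := by ring
    have := hC4 (x, y); rw [Real.norm_eq_abs] at this
    nlinarith
  have hcd : (0:ℝ) < (1 + x^2) * (1 + y^2) := by positivity
  rw [← mul_inv, ← div_eq_mul_inv, le_div_iff₀ hcd]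
  nlinarith

/-- sup bound for Schwartz functions. -/
lemma schwartz_bounded (f : 𝓢(ℝ × ℝ, ℝ)) :
    ∃ C : ℝ, 0 ≤ C ∧ ∀ z : ℝ × ℝ, |f z| ≤ C := by
  obtain ⟨C0, -, hC0⟩ := f.decay 0 0
  simp only [pow_zero, one_mul, norm_iteratedFDeriv_zero] at hC0
  exact ⟨C0, le_trans (norm_nonneg _) (hC0 0), fun z => by
    have := hC0 z; rwa [Real.norm_eq_abs] at this⟩

lemma inv_one_add_sq_le_one (x : ℝ) : (1 + x^2)⁻¹ ≤ 1 :=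
  inv_le_one_of_one_le₀ (by nlinarith [sq_nonneg x])

lemma inv_one_add_sq_nonneg (x : ℝ) : (0:ℝ) ≤ (1 + x^2)⁻¹ := by positivity

/-- decay bound for product of two Schwartz functions. -/
lemma prod_bound (f g : 𝓢(ℝ × ℝ, ℝ)) :
    ∃ D : ℝ, 0 ≤ D ∧ ∀ x y : ℝ,
      |f (x, y) * g (x, y)| ≤ D * ((1 + x^2)⁻¹ * (1 + y^2)⁻¹) := by
  obtain ⟨Df, hDf, hf⟩ := schwartz_decay f
  obtain ⟨Cg, hCg, hg⟩ := schwartz_bounded g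
  refine ⟨Df * Cg, by positivity, fun x y => ?_⟩
  rw [abs_mul]
  calc |f (x, y)| * |g (x, y)| ≤ (Df * ((1 + x^2)⁻¹ * (1 + y^2)⁻¹)) * Cg := by
        apply mul_le_mul (hf x y) (hg (x, y)) (abs_nonneg _) (by positivity)
    _ = Df * Cg * ((1 + x^2)⁻¹ * (1 + y^2)⁻¹) := by ring

/-- 1-D integrability from decay bound. -/
lemma integrable1D {φ : ℝ → ℝ} (hc : Continuous φ) {D : ℝ}
    (hb : ∀ x, |φ x| ≤ D * (1 + x^2)⁻¹) : Integrable φ := by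
  refine (integrable_inv_one_add_sq.const_mul D).mono' hc.aestronglyMeasurable ?_
  exact ae_of_all _ fun x => by simpa [Real.norm_eq_abs] using hb x

/-- 2-D integrability from decay bound. -/
lemma integrable2D {φ : ℝ × ℝ → ℝ} (hc : Continuous φ) {D : ℝ}
    (hb : ∀ x y, |φ (x, y)| ≤ D * ((1 + x^2)⁻¹ * (1 + y^2)⁻¹)) :
    Integrable φ (volume : Measure (ℝ × ℝ)) := by
  have base : Integrable (fun z : ℝ × ℝ => (1 + z.1^2)⁻¹ * (1 + z.2^2)⁻¹)
      (volume : Measure (ℝ × ℝ)) := by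
    rw [Measure.volume_eq_prod]
    exact integrable_inv_one_add_sq.mul_prod integrable_inv_one_add_sq
  refine (base.const_mul D).mono' hc.aestronglyMeasurable ?_
  exact ae_of_all _ fun z => by simpa [Real.norm_eq_abs] using hb z.1 z.2

lemma integrable_mul (f g : 𝓢(ℝ × ℝ, ℝ)) :
    Integrable (fun z => f z * g z) (volume : Measure (ℝ × ℝ)) := by
  obtain ⟨D, hD, hb⟩ := prod_bound f g
  exact integrable2D (f.continuous.mul g.continuous) (fun x y => hb x y)

lemma slice_integrable_x (f g : 𝓢(ℝ × ℝ, ℝ)) (y : ℝ) :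
    Integrable (fun x => f (x, y) * g (x, y)) := by
  obtain ⟨D, hD, hb⟩ := prod_bound f g
  refine integrable1D (D := D * (1 + y^2)⁻¹)
    ((f.continuous.comp (by fun_prop)).mul (g.continuous.comp (by fun_prop))) fun x => ?_
  calc |f (x, y) * g (x, y)| ≤ D * ((1 + x^2)⁻¹ * (1 + y^2)⁻¹) := hb x y
    _ = D * (1 + y^2)⁻¹ * (1 + x^2)⁻¹ := by ring

/-- limit 0 at +∞ from decay bound. -/
lemma tendsto_atTop_of_bound {φ : ℝ → ℝ} {D : ℝ}
    (hb : ∀ x, |φ x| ≤ D * (1 + x^2)⁻¹) : Tendsto φ atTop (nhds 0) := by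
  have h1 : Tendsto (fun x : ℝ => 1 + x^2) atTop atTop :=
    tendsto_atTop_add_const_left _ 1 (tendsto_pow_atTop two_ne_zero)
  have h2 : Tendsto (fun x : ℝ => D * (1 + x^2)⁻¹) atTop (nhds 0) := by
    simpa using (h1.inv_tendsto_atTop).const_mul D
  exact squeeze_zero_norm (fun x => by simpa [Real.norm_eq_abs] using hb x) h2

lemma tendsto_atBot_of_bound {φ : ℝ → ℝ} {D : ℝ}
    (hb : ∀ x, |φ x| ≤ D * (1 + x^2)⁻¹) : Tendsto φ atBot (nhds 0) := by
  have h1 : Tendsto (fun x : ℝ => 1 + x^2) atBot atTop := by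
    have habs : Tendsto (fun x : ℝ => |x|) atBot atTop := tendsto_abs_atBot_atTop
    have := (tendsto_pow_atTop (n := 2) two_ne_zero).comp habs
    simp only [Function.comp_def, sq_abs] at this
    exact tendsto_atTop_add_const_left _ 1 this
  have h2 : Tendsto (fun x : ℝ => D * (1 + x^2)⁻¹) atBot (nhds 0) := by
    simpa using (h1.inv_tendsto_atTop).const_mul D
  exact squeeze_zero_norm (fun x => by simpa [Real.norm_eq_abs] using hb x) h2

/-- derivative of x-slice. -/
lemma hasDerivAt_slice_x (u : 𝓢(ℝ × ℝ, ℝ)) (x y : ℝ) :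
    HasDerivAt (fun t => u (t, y)) (fderiv ℝ u (x, y) (1, 0)) x := by
  have hF : HasFDerivAt u (fderiv ℝ u (x, y)) (x, y) :=
    (u.differentiable.differentiableAt).hasFDerivAt
  have hg : HasDerivAt (fun t : ℝ => ((t, y) : ℝ × ℝ)) ((1:ℝ), (0:ℝ)) x := by
    simpa using ((hasDerivAt_id x).prodMk (hasDerivAt_const x y))
  exact hF.comp_hasDerivAt x hg

/-- derivative of y-slice. -/
lemma hasDerivAt_slice_y (u : 𝓢(ℝ × ℝ, ℝ)) (x y : ℝ) :
    HasDerivAt (fun t => u (x, t)) (fderiv ℝ u (x, y) (0, 1)) y := by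
  have hF : HasFDerivAt u (fderiv ℝ u (x, y)) (x, y) :=
    (u.differentiable.differentiableAt).hasFDerivAt
  have hg : HasDerivAt (fun t : ℝ => ((x, t) : ℝ × ℝ)) ((0:ℝ), (1:ℝ)) y := by
    simpa using ((hasDerivAt_const y x).prodMk (hasDerivAt_id y))
  exact hF.comp_hasDerivAt y hg

set_option maxHeartbeats 1000000 in
lemma core (u V : 𝓢(ℝ × ℝ, ℝ))
    (hV : ∀ z : ℝ × ℝ, (pderivCLM ℝ ((1:ℝ), (0:ℝ)) V) z = (pderivCLM ℝ ((0:ℝ), (1:ℝ)) u) z) :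
    ∫ z : ℝ × ℝ, (u z)^6 ≤
      16 * (∫ z : ℝ × ℝ, ((pderivCLM ℝ ((1:ℝ), (0:ℝ)) u) z)^2)^2 * (∫ z : ℝ × ℝ, (V z)^2) := by
  set ux : 𝓢(ℝ × ℝ, ℝ) := pderivCLM ℝ ((1:ℝ), (0:ℝ)) u with hux_def
  set uy : 𝓢(ℝ × ℝ, ℝ) := pderivCLM ℝ ((0:ℝ), (1:ℝ)) u with huy_def
  set Vx : 𝓢(ℝ × ℝ, ℝ) := pderivCLM ℝ ((1:ℝ), (0:ℝ)) V with hVx_def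
  have hux : ∀ z : ℝ × ℝ, ux z = fderiv ℝ u z (1, 0) := fun z => pderivCLM_apply ℝ _ u z
  have huy : ∀ z : ℝ × ℝ, uy z = fderiv ℝ u z (0, 1) := fun z => pderivCLM_apply ℝ _ u z
  have hVx : ∀ z : ℝ × ℝ, Vx z = fderiv ℝ V z (1, 0) := fun z => pderivCLM_apply ℝ _ V z
  have hVxuy : ∀ z : ℝ × ℝ, Vx z = uy z := hV
  -- names
  set F : ℝ → ℝ := fun y => ∫ x, (u (x, y))^2 with hF_def
  set G : ℝ → ℝ := fun y => ∫ x, 2 * |u (x, y) * ux (x, y)| with hG_def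
  set H : ℝ → ℝ := fun s => ∫ x, 2 * |ux (x, s) * V (x, s)| with hH_def
  set Bs : ℝ → ℝ := fun y => ∫ x, (ux (x, y))^2 with hBs_def
  set K : ℝ := ∫ s, H s with hK_def
  set B : ℝ := ∫ z : ℝ × ℝ, (ux z)^2 with hB_def
  set W : ℝ := ∫ z : ℝ × ℝ, (V z)^2 with hW_def
  have contx : ∀ (f : 𝓢(ℝ × ℝ, ℝ)) (t : ℝ), Continuous (fun x => f (x, t)) :=
    fun f t => f.continuous.comp (continuous_id.prodMk continuous_const)
  have intu2 : ∀ y, Integrable (fun x => (u (x, y))^2) := fun y => by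
    simpa [pow_two] using slice_integrable_x u u y
  have intux2 : ∀ y, Integrable (fun x => (ux (x, y))^2) := fun y => by
    simpa [pow_two] using slice_integrable_x ux ux y
  have hFnn : ∀ y, 0 ≤ F y := fun y => integral_nonneg fun x => sq_nonneg _
  have hBsnn : ∀ y, 0 ≤ Bs y := fun y => integral_nonneg fun x => sq_nonneg _
  have hHnn : ∀ s, 0 ≤ H s := fun s => integral_nonneg fun x => by positivity
  have hGnn : ∀ y, 0 ≤ G y := fun y => integral_nonneg fun x => by positivity
  have hKnn : 0 ≤ K := integral_nonneg fun s => hHnn s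
  have hBnn : 0 ≤ B := integral_nonneg fun z => sq_nonneg _
  have hWnn : 0 ≤ W := integral_nonneg fun z => sq_nonneg _
  -- derivative of x-slices of u and V, in Schwartz form
  have hdx : ∀ (f : 𝓢(ℝ × ℝ, ℝ)) (x y : ℝ),
      HasDerivAt (fun t => f (t, y)) ((pderivCLM ℝ ((1:ℝ), (0:ℝ)) f) (x, y)) x := by
    intro f x y
    have := hasDerivAt_slice_x f x y
    rwa [← pderivCLM_apply ℝ ((1:ℝ), (0:ℝ)) f (x, y)] at this
  have hdy : ∀ (f : 𝓢(ℝ × ℝ, ℝ)) (x y : ℝ),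
      HasDerivAt (fun t => f (x, t)) ((pderivCLM ℝ ((0:ℝ), (1:ℝ)) f) (x, y)) y := by
    intro f x y
    have := hasDerivAt_slice_y f x y
    rwa [← pderivCLM_apply ℝ ((0:ℝ), (1:ℝ)) f (x, y)] at this
  -- Step A : pointwise bound by G
  have stepA : ∀ y x0, (u (x0, y))^2 ≤ G y := by
    intro y x0
    obtain ⟨D, hD, hDb⟩ := prod_bound u u
    have htend : Tendsto (fun x => (u (x, y))^2) atTop (nhds 0) := by
      apply tendsto_atTop_of_bound (D := D * (1 + y^2)⁻¹)
      intro x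
      calc |(u (x, y))^2| = |u (x, y) * u (x, y)| := by rw [pow_two]
        _ ≤ D * ((1 + x^2)⁻¹ * (1 + y^2)⁻¹) := hDb x y
        _ = D * (1 + y^2)⁻¹ * (1 + x^2)⁻¹ := by ring
    have hderiv : ∀ x, HasDerivAt (fun t => (u (t, y))^2) (2 * u (x, y) * ux (x, y)) x := by
      intro x
      have h1 := (hdx u x y).pow 2
      refine h1.congr_deriv ?_
      rw [hux_def]
      push_cast
      ring
    have hint : Integrable (fun x => 2 * u (x, y) * ux (x, y)) := by
      have := (slice_integrable_x u ux y).const_mul 2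
      simpa [mul_assoc] using this
    have habs : Integrable (fun x => 2 * |u (x, y) * ux (x, y)|) :=
      (slice_integrable_x u ux y).abs.const_mul 2
    have key := integral_Ioi_of_hasDerivAt_of_tendsto' (a := x0) (f := fun x => (u (x, y))^2)
        (fun x _ => hderiv x) hint.integrableOn htend
    have h1 : (u (x0, y))^2 = ∫ x in Ioi x0, (-(2 * u (x, y) * ux (x, y))) := by
      rw [integral_neg, key]; ring
    rw [h1]
    calc ∫ x in Ioi x0, -(2 * u (x, y) * ux (x, y))
        ≤ ∫ x in Ioi x0, 2 * |u (x, y) * ux (x, y)| := by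
          apply setIntegral_mono hint.neg.integrableOn habs.integrableOn
          intro x
          simp only [Pi.neg_apply]
          have h2 : -(u (x, y) * ux (x, y)) ≤ |u (x, y) * ux (x, y)| := neg_le_abs _
          nlinarith [abs_nonneg (u (x, y) * ux (x, y))]
      _ ≤ G y := setIntegral_le_integral habs (ae_of_all _ fun x => by positivity)
  -- Step B : Cauchy-Schwarz on slices
  have hconj : Real.HolderConjugate 2 2 := ⟨by norm_num, by norm_num, by norm_num⟩
  have habs_rpow : ∀ a : ℝ, |a| ^ (2:ℝ) = a^2 := fun a => by
    rw [show (2:ℝ) = ((2:ℕ):ℝ) by norm_num, Real.rpow_natCast, sq_abs]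
  have hsqrt_sq : ∀ a : ℝ, 0 ≤ a → (a ^ ((1:ℝ)/2))^2 = a := by
    intro a ha
    rw [← Real.rpow_natCast (a ^ ((1:ℝ)/2)) 2, ← Real.rpow_mul ha]
    norm_num
  have memℒ2_abs : ∀ (f : 𝓢(ℝ × ℝ, ℝ)) (y : ℝ),
      MemLp (fun x => |f (x, y)|) (ENNReal.ofReal 2) (volume : Measure ℝ) := by
    intro f y
    have h2 : ENNReal.ofReal (2:ℝ) = 2 := by norm_num
    rw [h2, memLp_two_iff_integrable_sq ((contx f y).abs.aestronglyMeasurable)]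
    have := slice_integrable_x f f y
    refine this.congr ?_
    exact ae_of_all _ fun x => by
      simp only [pow_two]
      exact (abs_mul_abs_self _).symm
  have stepB : ∀ y, (G y)^2 ≤ 4 * (F y * Bs y) := by
    intro y
    have hCS := integral_mul_le_Lp_mul_Lq_of_nonneg hconj
      (ae_of_all _ fun x => abs_nonneg (u (x, y)))
      (ae_of_all _ fun x => abs_nonneg (ux (x, y)))
      (memℒ2_abs u y) (memℒ2_abs ux y)
    have e1 : (∫ x, |u (x, y)| * |ux (x, y)|) = ∫ x, |u (x, y) * ux (x, y)| := by
      simp_rw [← abs_mul]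
    have e2 : (∫ x, |u (x, y)| ^ (2:ℝ)) = F y := by simp_rw [habs_rpow]; rfl
    have e3 : (∫ x, |ux (x, y)| ^ (2:ℝ)) = Bs y := by simp_rw [habs_rpow]; rfl
    rw [e1, e2, e3] at hCS
    have hGeq : G y = 2 * ∫ x, |u (x, y) * ux (x, y)| := by
      rw [hG_def]
      exact integral_const_mul 2 _
    have hGle : G y ≤ 2 * ((F y) ^ ((1:ℝ)/2) * (Bs y) ^ ((1:ℝ)/2)) := by
      rw [hGeq]
      have := mul_le_mul_of_nonneg_left hCS (by norm_num : (0:ℝ) ≤ 2)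
      linarith
    have hrhs_nn : 0 ≤ 2 * ((F y) ^ ((1:ℝ)/2) * (Bs y) ^ ((1:ℝ)/2)) := by positivity
    calc (G y)^2 ≤ (2 * ((F y) ^ ((1:ℝ)/2) * (Bs y) ^ ((1:ℝ)/2)))^2 :=
          pow_le_pow_left₀ (hGnn y) hGle 2
      _ = 4 * (((F y) ^ ((1:ℝ)/2))^2 * ((Bs y) ^ ((1:ℝ)/2))^2) := by ring
      _ = 4 * (F y * Bs y) := by rw [hsqrt_sq _ (hFnn y), hsqrt_sq _ (hBsnn y)]
  -- Step C : F y ≤ K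
  have intuxV : Integrable (fun z : ℝ × ℝ => ux z * V z) (volume : Measure (ℝ × ℝ)) :=
    integrable_mul ux V
  have intHint : Integrable (fun z : ℝ × ℝ => 2 * |ux z * V z|) (volume : Measure (ℝ × ℝ)) :=
    intuxV.abs.const_mul 2
  have hHInt : Integrable H := by
    have h := intHint
    rw [Measure.volume_eq_prod] at h
    exact h.integral_prod_right
  have gdef : ℝ → ℝ := fun s => -(2 * ∫ x, ux (x, s) * V (x, s))
  set g : ℝ → ℝ := fun s => -(2 * ∫ x, ux (x, s) * V (x, s)) with hg_def
  have hgInt : Integrable g := by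
    have h := intuxV
    rw [Measure.volume_eq_prod] at h
    exact ((h.integral_prod_right).const_mul 2).neg
  have parts : ∀ s, (∫ x, u (x, s) * Vx (x, s)) = -∫ x, ux (x, s) * V (x, s) := by
    intro s
    exact integral_mul_deriv_eq_deriv_mul_of_integrable
      (fun x _ => hdx u x s) (fun x _ => hdx V x s)
      (slice_integrable_x u Vx s) (slice_integrable_x ux V s) (slice_integrable_x u V s)
  have hFg : ∀ s, HasDerivAt F (g s) s := by
    intro s
    obtain ⟨D, hD, hDb⟩ := prod_bound u uy
    have h := hasDerivAt_integral_of_dominated_loc_of_deriv_le (μ := volume) (𝕜 := ℝ)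
        (F := fun t x => (u (x, t))^2) (F' := fun t x => 2 * u (x, t) * uy (x, t))
        (x₀ := s) (bound := fun x => 2 * D * (1 + x^2)⁻¹) (s := Metric.ball s 1) (Metric.ball_mem_nhds s one_pos)
        (Eventually.of_forall fun t => ((contx u t).pow 2).aestronglyMeasurable)
        (intu2 s)
        ((continuous_const.mul (contx u s)).mul (contx uy s)).aestronglyMeasurable
        (ae_of_all _ fun x t _ => ?_)
        (integrable_inv_one_add_sq.const_mul (2 * D))
        (ae_of_all _ fun x t _ => ?_)
    · have hF' := h.2
      have heq : (∫ x, 2 * u (x, s) * uy (x, s)) = g s := by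
        have h1 : (fun x => 2 * u (x, s) * uy (x, s)) = fun x => 2 * (u (x, s) * Vx (x, s)) := by
          funext x
          rw [hVxuy]
          ring
        rw [h1, integral_const_mul, parts s, hg_def]
        ring
      rwa [heq] at hF'
    · -- bound
      have h1 := hDb x t
      have h2 : (1 + t^2)⁻¹ ≤ 1 := inv_one_add_sq_le_one t
      have h3 : (0:ℝ) ≤ (1 + x^2)⁻¹ := by positivity
      have h4 : (0:ℝ) ≤ (1 + t^2)⁻¹ := by positivity
      rw [Real.norm_eq_abs]
      calc |2 * u (x, t) * uy (x, t)| = 2 * |u (x, t) * uy (x, t)| := by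
            rw [mul_assoc, abs_mul, abs_two]
        _ ≤ 2 * (D * ((1 + x^2)⁻¹ * (1 + t^2)⁻¹)) := by linarith
        _ ≤ 2 * D * (1 + x^2)⁻¹ := by
            have h5 : D * (1 + x^2)⁻¹ * (1 + t^2)⁻¹ ≤ D * (1 + x^2)⁻¹ * 1 :=
              mul_le_mul_of_nonneg_left h2 (mul_nonneg hD h3)
            nlinarith
    · -- differentiability
      have h1 := (hdy u x t).pow 2
      refine h1.congr_deriv ?_
      rw [huy_def]
      push_cast
      ring
  have hgleH : ∀ s, |g s| ≤ H s := by
    intro s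
    rw [hg_def]
    have h1 : |(-(2 * ∫ x, ux (x, s) * V (x, s)))| = 2 * |∫ x, ux (x, s) * V (x, s)| := by
      rw [abs_neg, abs_mul, abs_two]
    rw [h1]
    have h2 : |∫ x, ux (x, s) * V (x, s)| ≤ ∫ x, |ux (x, s) * V (x, s)| := by
      have := norm_integral_le_integral_norm (fun x => ux (x, s) * V (x, s)) (μ := volume)
      simp only [Real.norm_eq_abs] at this
      exact this
    have h3 : H s = 2 * ∫ x, |ux (x, s) * V (x, s)| := integral_const_mul 2 _
    linarith
  have hFbot : Tendsto F atBot (nhds 0) := by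
    obtain ⟨D, hD, hDb⟩ := prod_bound u u
    apply tendsto_atBot_of_bound (D := D * ∫ x : ℝ, (1 + x^2)⁻¹)
    intro y
    have hFy : F y ≤ D * (1 + y^2)⁻¹ * ∫ x : ℝ, (1 + x^2)⁻¹ := by
      calc F y ≤ ∫ x : ℝ, D * (1 + y^2)⁻¹ * (1 + x^2)⁻¹ := by
            apply integral_mono (intu2 y) (integrable_inv_one_add_sq.const_mul _)
            intro x
            have h1 := hDb x y
            calc (u (x, y))^2 = |u (x, y) * u (x, y)| := by
                  rw [pow_two]
                  exact (abs_of_nonneg (mul_self_nonneg _)).symm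
              _ ≤ D * ((1 + x^2)⁻¹ * (1 + y^2)⁻¹) := h1
              _ = D * (1 + y^2)⁻¹ * (1 + x^2)⁻¹ := by ring
        _ = D * (1 + y^2)⁻¹ * ∫ x : ℝ, (1 + x^2)⁻¹ := integral_const_mul _ _
    have hI0 : (0:ℝ) ≤ ∫ x : ℝ, (1 + x^2)⁻¹ := integral_nonneg fun x => by positivity
    rw [abs_of_nonneg (hFnn y)]
    calc F y ≤ D * (1 + y^2)⁻¹ * ∫ x : ℝ, (1 + x^2)⁻¹ := hFy
      _ = (D * ∫ x : ℝ, (1 + x^2)⁻¹) * (1 + y^2)⁻¹ := by ring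
  have stepC : ∀ y, F y ≤ K := by
    intro y
    have hkey := integral_Iic_of_hasDerivAt_of_tendsto' (a := y) (f := F) (f' := g)
        (fun s _ => hFg s) hgInt.integrableOn hFbot
    have h1 : F y = ∫ s in Iic y, g s := by rw [hkey, sub_zero]
    rw [h1]
    calc ∫ s in Iic y, g s ≤ ∫ s in Iic y, H s := by
          apply setIntegral_mono hgInt.integrableOn hHInt.integrableOn
          intro s
          exact (le_abs_self _).trans (hgleH s)
      _ ≤ K := setIntegral_le_integral hHInt (ae_of_all _ fun s => hHnn s)
  -- Step D
  obtain ⟨C, hC, hCb⟩ := schwartz_bounded u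
  have hint6 : ∀ y, Integrable (fun x => (u (x, y))^6) := by
    intro y
    refine ((intu2 y).const_mul (C^4)).mono'
      (((contx u y).pow 6).aestronglyMeasurable) (ae_of_all _ fun x => ?_)
    have h1 : |u (x, y)| ≤ C := hCb (x, y)
    have h2 : |u (x, y)|^4 ≤ C^4 := pow_le_pow_left₀ (abs_nonneg _) h1 4
    calc ‖(u (x, y))^6‖ = |u (x, y)|^6 := by rw [Real.norm_eq_abs, abs_pow]
      _ = |u (x, y)|^4 * |u (x, y)|^2 := by ring
      _ ≤ C^4 * |u (x, y)|^2 := by nlinarith [pow_nonneg (abs_nonneg (u (x, y))) 2]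
      _ = C^4 * (u (x, y))^2 := by rw [sq_abs]
  have stepD : ∀ y, (∫ x, (u (x, y))^6) ≤ 4 * K^2 * Bs y := by
    intro y
    have hpt : ∀ x, (u (x, y))^6 ≤ (G y)^2 * (u (x, y))^2 := by
      intro x
      have h1 : (u (x, y))^2 ≤ G y := stepA y x
      have h2 : ((u (x, y))^2)^2 ≤ (G y)^2 := pow_le_pow_left₀ (sq_nonneg _) h1 2
      calc (u (x, y))^6 = ((u (x, y))^2)^2 * (u (x, y))^2 := by ring
        _ ≤ (G y)^2 * (u (x, y))^2 := by nlinarith [sq_nonneg (u (x, y))]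
    have hFK2 : (F y)^2 ≤ K^2 := pow_le_pow_left₀ (hFnn y) (stepC y) 2
    calc ∫ x, (u (x, y))^6 ≤ ∫ x, (G y)^2 * (u (x, y))^2 :=
          integral_mono (hint6 y) ((intu2 y).const_mul _) hpt
      _ = (G y)^2 * F y := integral_const_mul _ _
      _ ≤ (4 * (F y * Bs y)) * F y := by
          have := stepB y
          nlinarith [hFnn y]
      _ ≤ 4 * K^2 * Bs y := by nlinarith [hBsnn y, hFnn y]
  -- Fubini steps
  have hint6glob : Integrable (fun z : ℝ × ℝ => (u z)^6) (volume : Measure (ℝ × ℝ)) := by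
    refine ((integrable_mul u u).const_mul (C^4)).mono'
      (u.continuous.pow 6).aestronglyMeasurable (ae_of_all _ fun z => ?_)
    have h1 : |u z| ≤ C := hCb z
    have h2 : |u z|^4 ≤ C^4 := pow_le_pow_left₀ (abs_nonneg _) h1 4
    calc ‖(u z)^6‖ = |u z|^6 := by rw [Real.norm_eq_abs, abs_pow]
      _ = |u z|^4 * |u z|^2 := by ring
      _ ≤ C^4 * |u z|^2 := by nlinarith [pow_nonneg (abs_nonneg (u z)) 2]
      _ = C^4 * (u z * u z) := by rw [sq_abs, pow_two]
  have intux2glob : Integrable (fun z : ℝ × ℝ => (ux z)^2) (volume : Measure (ℝ × ℝ)) := by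
    simpa [pow_two] using integrable_mul ux ux
  have fub6 : ∫ z : ℝ × ℝ, (u z)^6 = ∫ y, ∫ x, (u (x, y))^6 := by
    rw [Measure.volume_eq_prod]
    rw [integral_prod_symm _ (by rw [← Measure.volume_eq_prod]; exact hint6glob)]
  have fubB : (∫ y, Bs y) = B := by
    rw [hB_def, Measure.volume_eq_prod]
    rw [integral_prod_symm _ (by rw [← Measure.volume_eq_prod]; exact intux2glob)]
  have intY6 : Integrable (fun y => ∫ x, (u (x, y))^6) := by
    have h := hint6glob
    rw [Measure.volume_eq_prod] at h
    exact h.integral_prod_right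
  have intYB : Integrable Bs := by
    have h := intux2glob
    rw [Measure.volume_eq_prod] at h
    exact h.integral_prod_right
  have stepE : ∫ z : ℝ × ℝ, (u z)^6 ≤ 4 * K^2 * B := by
    rw [fub6]
    calc ∫ y, ∫ x, (u (x, y))^6 ≤ ∫ y, 4 * K^2 * Bs y :=
          integral_mono intY6 (intYB.const_mul _) stepD
      _ = 4 * K^2 * ∫ y, Bs y := integral_const_mul _ _
      _ = 4 * K^2 * B := by rw [fubB]
  -- Step F : K ≤ 2 √B √W
  have memℒ2_abs_glob : ∀ (f : 𝓢(ℝ × ℝ, ℝ)),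
      MemLp (fun z => |f z|) (ENNReal.ofReal 2) (volume : Measure (ℝ × ℝ)) := by
    intro f
    have h2 : ENNReal.ofReal (2:ℝ) = 2 := by norm_num
    rw [h2, memLp_two_iff_integrable_sq f.continuous.abs.aestronglyMeasurable]
    refine (integrable_mul f f).congr (ae_of_all _ fun z => ?_)
    simp only [pow_two]
    exact (abs_mul_abs_self _).symm
  have fubK : K = ∫ z : ℝ × ℝ, 2 * |ux z * V z| := by
    rw [hK_def, Measure.volume_eq_prod]
    rw [integral_prod_symm _ (by rw [← Measure.volume_eq_prod]; exact intHint)]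
  have stepF : K ≤ 2 * (B ^ ((1:ℝ)/2) * W ^ ((1:ℝ)/2)) := by
    have hCS := integral_mul_le_Lp_mul_Lq_of_nonneg hconj
      (ae_of_all _ fun z : ℝ × ℝ => abs_nonneg (ux z))
      (ae_of_all _ fun z : ℝ × ℝ => abs_nonneg (V z))
      (memℒ2_abs_glob ux) (memℒ2_abs_glob V)
    have e1 : (∫ z : ℝ × ℝ, |ux z| * |V z|) = ∫ z : ℝ × ℝ, |ux z * V z| := by
      simp_rw [← abs_mul]
    have e2 : (∫ z : ℝ × ℝ, |ux z| ^ (2:ℝ)) = B := by simp_rw [habs_rpow]; rfl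
    have e3 : (∫ z : ℝ × ℝ, |V z| ^ (2:ℝ)) = W := by simp_rw [habs_rpow]; rfl
    rw [e1, e2, e3] at hCS
    have h1 : K = 2 * ∫ z : ℝ × ℝ, |ux z * V z| := by rw [fubK]; exact integral_const_mul 2 _
    rw [h1]
    linarith
  -- Conclusion
  have hK2 : K^2 ≤ 4 * (B * W) := by
    calc K^2 ≤ (2 * (B ^ ((1:ℝ)/2) * W ^ ((1:ℝ)/2)))^2 := pow_le_pow_left₀ hKnn stepF 2
      _ = 4 * ((B ^ ((1:ℝ)/2))^2 * (W ^ ((1:ℝ)/2))^2) := by ring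
      _ = 4 * (B * W) := by rw [hsqrt_sq _ hBnn, hsqrt_sq _ hWnn]
  calc ∫ z : ℝ × ℝ, (u z)^6 ≤ 4 * K^2 * B := stepE
    _ ≤ 4 * (4 * (B * W)) * B := by nlinarith
    _ = 16 * B^2 * W := by ring

lemma memℒp_schwartz (f : 𝓢(ℝ × ℝ, ℝ)) {q : ℝ} (hq : 2 ≤ q) :
    MemLp f (ENNReal.ofReal q) (volume : Measure (ℝ × ℝ)) := by
  have hq0 : (0:ℝ) < q := by linarith
  have hne : ENNReal.ofReal q ≠ 0 := by
    simp only [ne_eq, ENNReal.ofReal_eq_zero, not_le]; linarith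
  have hnetop : ENNReal.ofReal q ≠ ⊤ := ENNReal.ofReal_ne_top
  rw [← memLp_norm_rpow_iff (q := ENNReal.ofReal q) (p := ENNReal.ofReal q)
      f.continuous.aestronglyMeasurable hne hnetop,
    ENNReal.div_self hne hnetop, ENNReal.toReal_ofReal hq0.le,
    memLp_one_iff_integrable]
  obtain ⟨C, hC, hCb⟩ := schwartz_bounded f
  have key : Integrable (fun z : ℝ × ℝ => (C+1)^(q-2) * (f z * f z))
      (volume : Measure (ℝ × ℝ)) := (integrable_mul f f).const_mul _
  refine key.mono' (Continuous.aestronglyMeasurable ?_) (ae_of_all _ fun z => ?_)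
  · exact f.continuous.norm.rpow_const (fun z => Or.inr hq0.le)
  · have h1 : ‖‖f z‖ ^ q‖ = ‖f z‖ ^ q := by
      rw [Real.norm_eq_abs, abs_of_nonneg (Real.rpow_nonneg (norm_nonneg _) q)]
    rw [h1]
    have h2 : ‖f z‖ ^ q = ‖f z‖ ^ (2:ℝ) * ‖f z‖ ^ (q-2) := by
      rw [← Real.rpow_add' (norm_nonneg _) (by norm_num; linarith)]
      norm_num
    have h3 : ‖f z‖ ^ (2:ℝ) = f z * f z := by
      rw [show (2:ℝ) = ((2:ℕ):ℝ) by norm_num, Real.rpow_natCast, Real.norm_eq_abs, pow_two,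
        abs_mul_abs_self]
    have h4 : ‖f z‖ ^ (q-2) ≤ (C+1) ^ (q-2) := by
      apply Real.rpow_le_rpow (norm_nonneg _) _ (by linarith)
      rw [Real.norm_eq_abs]
      have := hCb z
      linarith
    rw [h2, h3]
    have h5 : (0:ℝ) ≤ f z * f z := mul_self_nonneg _
    calc f z * f z * ‖f z‖ ^ (q-2) ≤ f z * f z * (C+1)^(q-2) :=
          mul_le_mul_of_nonneg_left h4 h5
      _ = (C+1)^(q-2) * (f z * f z) := by ring

lemma memℒp2 (f : 𝓢(ℝ × ℝ, ℝ)) : MemLp f 2 (volume : Measure (ℝ × ℝ)) := by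
  have := memℒp_schwartz f (le_refl 2)
  rwa [show ENNReal.ofReal (2:ℝ) = 2 by norm_num] at this

lemma memℒp6 (f : 𝓢(ℝ × ℝ, ℝ)) : MemLp f 6 (volume : Measure (ℝ × ℝ)) := by
  have := memℒp_schwartz f (by norm_num : (2:ℝ) ≤ 6)
  rwa [show ENNReal.ofReal (6:ℝ) = 6 by norm_num [ENNReal.ofReal_ofNat]] at this

lemma rpow_inv_pow {a : ℝ} (ha : 0 ≤ a) {n : ℕ} (hn : n ≠ 0) :
    (a ^ (((n:ℝ))⁻¹)) ^ n = a := by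
  rw [← Real.rpow_natCast (a ^ ((n:ℝ)⁻¹)) n, ← Real.rpow_mul ha,
    inv_mul_cancel₀ (by exact_mod_cast hn), Real.rpow_one]

lemma L2_sq (f : 𝓢(ℝ × ℝ, ℝ)) :
    ((eLpNorm f 2 (volume : Measure (ℝ × ℝ))).toReal)^2 = ∫ z : ℝ × ℝ, (f z)^2 := by
  have hm := memℒp2 f
  rw [hm.eLpNorm_eq_integral_rpow_norm two_ne_zero ENNReal.ofNat_ne_top]
  have htr : (2:ENNReal).toReal = (2:ℝ) := by norm_num
  rw [htr]
  have hint : (∫ z : ℝ × ℝ, ‖f z‖ ^ (2:ℝ)) = ∫ z : ℝ × ℝ, (f z)^2 := by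
    congr 1
    funext z
    rw [show (2:ℝ) = ((2:ℕ):ℝ) by norm_num, Real.rpow_natCast, Real.norm_eq_abs, sq_abs]
  rw [hint, ENNReal.toReal_ofReal (Real.rpow_nonneg (integral_nonneg fun z => sq_nonneg _) _)]
  exact rpow_inv_pow (integral_nonneg fun z => sq_nonneg _) two_ne_zero

lemma L6_pow (f : 𝓢(ℝ × ℝ, ℝ)) :
    ((eLpNorm f 6 (volume : Measure (ℝ × ℝ))).toReal)^6 = ∫ z : ℝ × ℝ, (f z)^6 := by
  have hm := memℒp6 f
  rw [hm.eLpNorm_eq_integral_rpow_norm (by norm_num) (by norm_num)]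
  have htr : (6:ENNReal).toReal = (6:ℝ) := by norm_num
  rw [htr]
  have hint : (∫ z : ℝ × ℝ, ‖f z‖ ^ (6:ℝ)) = ∫ z : ℝ × ℝ, (f z)^6 := by
    congr 1
    funext z
    rw [show (6:ℝ) = ((6:ℕ):ℝ) by norm_num, Real.rpow_natCast, Real.norm_eq_abs, pow_abs,
      abs_of_nonneg (by positivity : (0:ℝ) ≤ (f z)^6)]
  have hnn : (0:ℝ) ≤ ∫ z : ℝ × ℝ, (f z)^6 := integral_nonneg fun z => by positivity
  rw [hint, ENNReal.toReal_ofReal (Real.rpow_nonneg hnn _)]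
  exact rpow_inv_pow hnn (by norm_num)

lemma L6_bound (u V : 𝓢(ℝ × ℝ, ℝ))
    (hV : ∀ z : ℝ × ℝ, (pderivCLM ℝ ((1:ℝ), (0:ℝ)) V) z = (pderivCLM ℝ ((0:ℝ), (1:ℝ)) u) z) :
    (eLpNorm u 6 (volume : Measure (ℝ × ℝ))).toReal ≤
      (16:ℝ) ^ ((1:ℝ)/6) *
        (eLpNorm (pderivCLM ℝ ((1:ℝ), (0:ℝ)) u) 2 (volume : Measure (ℝ × ℝ))).toReal ^ ((2:ℝ)/3) *
        (eLpNorm V 2 (volume : Measure (ℝ × ℝ))).toReal ^ ((1:ℝ)/3) := by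
  set ux : 𝓢(ℝ × ℝ, ℝ) := pderivCLM ℝ ((1:ℝ), (0:ℝ)) u with hux_def
  set N6 : ℝ := (eLpNorm u 6 (volume : Measure (ℝ × ℝ))).toReal with hN6
  set M2 : ℝ := (eLpNorm ux 2 (volume : Measure (ℝ × ℝ))).toReal with hM2
  set M3 : ℝ := (eLpNorm V 2 (volume : Measure (ℝ × ℝ))).toReal with hM3
  have hN6nn : 0 ≤ N6 := ENNReal.toReal_nonneg
  have hM2nn : 0 ≤ M2 := ENNReal.toReal_nonneg
  have hM3nn : 0 ≤ M3 := ENNReal.toReal_nonneg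
  have hc := core u V hV
  have h6 : N6^6 = ∫ z : ℝ × ℝ, (u z)^6 := L6_pow u
  have h2 : M2^2 = ∫ z : ℝ × ℝ, (ux z)^2 := L2_sq ux
  have h3 : M3^2 = ∫ z : ℝ × ℝ, (V z)^2 := L2_sq V
  have hkey : N6^6 ≤ 16 * M2^4 * M3^2 := by
    calc N6^6 = ∫ z : ℝ × ℝ, (u z)^6 := h6
      _ ≤ 16 * (∫ z : ℝ × ℝ, (ux z)^2)^2 * (∫ z : ℝ × ℝ, (V z)^2) := hc
      _ = 16 * (M2^2)^2 * (M3^2) := by rw [h2, h3]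
      _ = 16 * M2^4 * M3^2 := by ring
  have hN6eq : N6 = ((N6^(6:ℕ)):ℝ) ^ ((1:ℝ)/6) := by
    rw [← Real.rpow_natCast N6 6, ← Real.rpow_mul hN6nn]
    norm_num
  rw [hN6eq]
  have hstep : ((N6^(6:ℕ)):ℝ) ^ ((1:ℝ)/6) ≤ (16 * M2^4 * M3^2) ^ ((1:ℝ)/6) :=
    Real.rpow_le_rpow (by positivity) hkey (by norm_num)
  refine hstep.trans (le_of_eq ?_)
  rw [Real.mul_rpow (by positivity) (by positivity),
    Real.mul_rpow (by norm_num) (by positivity)]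
  congr 1
  · congr 1
    rw [← Real.rpow_natCast M2 4, ← Real.rpow_mul hM2nn]
    norm_num
  · rw [← Real.rpow_natCast M3 2, ← Real.rpow_mul hM3nn]
    norm_num

lemma interp (u : 𝓢(ℝ × ℝ, ℝ)) {p : ℝ} (hp2 : 2 < p) (hp6 : p < 6) :
    (eLpNorm u (ENNReal.ofReal p) (volume : Measure (ℝ × ℝ))).toReal ≤
      (eLpNorm u 2 (volume : Measure (ℝ × ℝ))).toReal ^ ((6-p)/(2*p)) *
        (eLpNorm u 6 (volume : Measure (ℝ × ℝ))).toReal ^ (1 - (6-p)/(2*p)) := by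
  have hp0 : (0:ℝ) < p := by linarith
  set θ : ℝ := (6-p)/(2*p) with hθ_def
  have hθ0 : 0 < θ := div_pos (by linarith) (by linarith)
  have hθ1 : θ < 1 := by
    rw [hθ_def, div_lt_one (by linarith)]
    linarith
  have h1θ : 0 < 1 - θ := by linarith
  have key : eLpNorm u (ENNReal.ofReal p) (volume : Measure (ℝ × ℝ)) ≤
      (eLpNorm u 2 (volume : Measure (ℝ × ℝ))) ^ θ *
        (eLpNorm u 6 (volume : Measure (ℝ × ℝ))) ^ (1-θ) := by
    have hq : (ENNReal.ofReal (2/θ)) * ENNReal.ofReal θ = 2 := by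
      rw [← ENNReal.ofReal_mul (by positivity), div_mul_cancel₀ _ (ne_of_gt hθ0)]
      norm_num
    have hr : (ENNReal.ofReal (6/(1-θ))) * ENNReal.ofReal (1-θ) = 6 := by
      rw [← ENNReal.ofReal_mul (by positivity), div_mul_cancel₀ _ (ne_of_gt h1θ)]
      norm_num [ENNReal.ofReal_ofNat]
    have e2 : eLpNorm (fun z : ℝ × ℝ => ‖u z‖ ^ θ) (ENNReal.ofReal (2/θ))
        (volume : Measure (ℝ × ℝ)) = (eLpNorm u 2 (volume : Measure (ℝ × ℝ))) ^ θ := by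
      rw [eLpNorm_norm_rpow u hθ0, hq]
    have e6 : eLpNorm (fun z : ℝ × ℝ => ‖u z‖ ^ (1-θ)) (ENNReal.ofReal (6/(1-θ)))
        (volume : Measure (ℝ × ℝ)) = (eLpNorm u 6 (volume : Measure (ℝ × ℝ))) ^ (1-θ) := by
      rw [eLpNorm_norm_rpow u h1θ, hr]
    have hreal : p⁻¹ = (2/θ)⁻¹ + (6/(1-θ))⁻¹ := by
      rw [inv_div, inv_div, hθ_def]
      field_simp
      ring
    have hpqr : 1/(ENNReal.ofReal p) =
        1/(ENNReal.ofReal (2/θ)) + 1/(ENNReal.ofReal (6/(1-θ))) := by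
      rw [one_div, one_div, one_div, ← ENNReal.ofReal_inv_of_pos hp0,
        ← ENNReal.ofReal_inv_of_pos (by positivity), ← ENNReal.ofReal_inv_of_pos (by positivity),
        ← ENNReal.ofReal_add (by positivity) (by positivity), hreal]
    haveI : ENNReal.HolderTriple (ENNReal.ofReal (2/θ)) (ENNReal.ofReal (6/(1-θ)))
        (ENNReal.ofReal p) := ⟨by simpa only [one_div] using hpqr.symm⟩
    have hH := eLpNorm_le_eLpNorm_mul_eLpNorm'_of_norm
      (μ := (volume : Measure (ℝ × ℝ)))
      (p := ENNReal.ofReal (2/θ)) (q := ENNReal.ofReal (6/(1-θ))) (r := ENNReal.ofReal p)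
      (f := fun z : ℝ × ℝ => ‖u z‖ ^ θ) (g := fun z : ℝ × ℝ => ‖u z‖ ^ (1-θ))
      (Continuous.aestronglyMeasurable (u.continuous.norm.rpow_const fun z => Or.inr hθ0.le))
      (Continuous.aestronglyMeasurable (u.continuous.norm.rpow_const fun z => Or.inr h1θ.le))
      (fun a b => a * b) 1
      (ae_of_all _ fun z => by rw [norm_mul, NNReal.coe_one, one_mul])
    have hfg : (fun z : ℝ × ℝ => ‖u z‖ ^ θ * ‖u z‖ ^ (1-θ)) = fun z : ℝ × ℝ => ‖u z‖ := by
      funext z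
      rw [← Real.rpow_add' (norm_nonneg _) (by norm_num)]
      norm_num
    rw [ENNReal.coe_one, one_mul] at hH
    rw [hfg, eLpNorm_norm] at hH
    rw [e2, e6] at hH
    exact hH
  have f2 : eLpNorm u 2 (volume : Measure (ℝ × ℝ)) ≠ ⊤ := (memℒp2 u).2.ne
  have f6 : eLpNorm u 6 (volume : Measure (ℝ × ℝ)) ≠ ⊤ := (memℒp6 u).2.ne
  have hRtop : (eLpNorm u 2 (volume : Measure (ℝ × ℝ))) ^ θ *
      (eLpNorm u 6 (volume : Measure (ℝ × ℝ))) ^ (1-θ) ≠ ⊤ := by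
    apply ENNReal.mul_ne_top
    · exact (ENNReal.rpow_lt_top_of_nonneg hθ0.le f2).ne
    · exact (ENNReal.rpow_lt_top_of_nonneg h1θ.le f6).ne
  have := ENNReal.toReal_mono hRtop key
  rwa [ENNReal.toReal_mul, ← ENNReal.toReal_rpow, ← ENNReal.toReal_rpow] at this

end AnisoAux

end

open AnisoAux

/-- Anisotropic Sobolev inequality for the KP energy space: for Schwartz `u` on `ℝ²`
and `V` with `∂_x V = ∂_y u` (i.e. `V = ∂_x⁻¹ ∂_y u`), and `2 ≤ p ≤ 6`,
`‖u‖_{L^p} ≤ C ‖u‖_{L²}^{(6-p)/(2p)} ‖∂_x u‖_{L²}^{(p-2)/p} ‖V‖_{L²}^{(p-2)/(2p)}`. -/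
theorem anisotropic_sobolev (p : ℝ) (hp2 : 2 ≤ p) (hp6 : p ≤ 6) :
    ∃ C > 0, ∀ (u V : 𝓢(ℝ × ℝ, ℝ)),
      (∀ z : ℝ × ℝ, fderiv ℝ V z (1, 0) = fderiv ℝ u z (0, 1)) →
      (eLpNorm (⇑u) (ENNReal.ofReal p) (volume : Measure (ℝ × ℝ))).toReal ≤
        C * (eLpNorm (⇑u) 2 (volume : Measure (ℝ × ℝ))).toReal ^ ((6 - p) / (2 * p))
          * (eLpNorm (fun z : ℝ × ℝ => fderiv ℝ u z (1, 0)) 2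
              (volume : Measure (ℝ × ℝ))).toReal ^ ((p - 2) / p)
          * (eLpNorm (⇑V) 2 (volume : Measure (ℝ × ℝ))).toReal ^ ((p - 2) / (2 * p)) := by
  refine ⟨2, by norm_num, fun u V hVf => ?_⟩
  have hV : ∀ z : ℝ × ℝ, (pderivCLM ℝ ((1:ℝ), (0:ℝ)) V) z = (pderivCLM ℝ ((0:ℝ), (1:ℝ)) u) z := by
    intro z
    rw [pderivCLM_apply, pderivCLM_apply]
    exact hVf z
  have hrw : (fun z : ℝ × ℝ => fderiv ℝ (⇑u) z (1, 0)) = ⇑(pderivCLM ℝ ((1:ℝ), (0:ℝ)) u) :=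
    funext fun z => (pderivCLM_apply ℝ _ u z).symm
  rw [hrw]
  set ux : 𝓢(ℝ × ℝ, ℝ) := pderivCLM ℝ ((1:ℝ), (0:ℝ)) u with hux_def
  set N2 : ℝ := (eLpNorm (⇑u) 2 (volume : Measure (ℝ × ℝ))).toReal with hN2_def
  set N6 : ℝ := (eLpNorm (⇑u) 6 (volume : Measure (ℝ × ℝ))).toReal with hN6_def
  set M2 : ℝ := (eLpNorm (⇑ux) 2 (volume : Measure (ℝ × ℝ))).toReal with hM2_def
  set M3 : ℝ := (eLpNorm (⇑V) 2 (volume : Measure (ℝ × ℝ))).toReal with hM3_def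
  have hN2nn : 0 ≤ N2 := ENNReal.toReal_nonneg
  have hN6nn : 0 ≤ N6 := ENNReal.toReal_nonneg
  have hM2nn : 0 ≤ M2 := ENNReal.toReal_nonneg
  have hM3nn : 0 ≤ M3 := ENNReal.toReal_nonneg
  have h16 : (16:ℝ) ^ ((1:ℝ)/6) ≤ 2 := by
    have h1 : (16:ℝ) = 2 ^ (4:ℝ) := by
      rw [show (4:ℝ) = ((4:ℕ):ℝ) by norm_num, Real.rpow_natCast]
      norm_num
    rw [h1, ← Real.rpow_mul (by norm_num)]
    calc (2:ℝ) ^ ((4:ℝ) * (1/6)) ≤ 2 ^ (1:ℝ) :=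
          Real.rpow_le_rpow_of_exponent_le (by norm_num) (by norm_num)
      _ = 2 := Real.rpow_one 2
  rcases eq_or_lt_of_le hp2 with hp2e | hp2l
  · -- p = 2
    subst hp2e
    rw [show ENNReal.ofReal (2:ℝ) = 2 by norm_num]
    rw [show ((6:ℝ) - 2) / (2 * 2) = 1 by norm_num,
      show ((2:ℝ) - 2) / 2 = 0 by norm_num,
      show ((2:ℝ) - 2) / (2 * 2) = 0 by norm_num,
      Real.rpow_one, Real.rpow_zero, Real.rpow_zero]
    linarith
  · rcases eq_or_lt_of_le hp6 with hp6e | hp6l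
    · -- p = 6
      subst hp6e
      rw [show ENNReal.ofReal (6:ℝ) = 6 by norm_num [ENNReal.ofReal_ofNat]]
      rw [show ((6:ℝ) - 6) / (2 * 6) = 0 by norm_num,
        show ((6:ℝ) - 2) / 6 = (2:ℝ)/3 by norm_num,
        show ((6:ℝ) - 2) / (2 * 6) = (1:ℝ)/3 by norm_num,
        Real.rpow_zero]
      have hl6 := L6_bound u V hV
      calc N6 ≤ (16:ℝ) ^ ((1:ℝ)/6) * M2 ^ ((2:ℝ)/3) * M3 ^ ((1:ℝ)/3) := hl6
        _ ≤ 2 * M2 ^ ((2:ℝ)/3) * M3 ^ ((1:ℝ)/3) := by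
            exact mul_le_mul_of_nonneg_right
              (mul_le_mul_of_nonneg_right h16 (Real.rpow_nonneg hM2nn ((2:ℝ)/3)))
              (Real.rpow_nonneg hM3nn ((1:ℝ)/3))
        _ = 2 * 1 * M2 ^ ((2:ℝ)/3) * M3 ^ ((1:ℝ)/3) := by ring
    · -- 2 < p < 6
      have hp0 : (0:ℝ) < p := by linarith
      have hi := interp u hp2l hp6l
      have hl6 := L6_bound u V hV
      set θ : ℝ := (6 - p) / (2 * p) with hθ_def
      have hθ0 : 0 ≤ θ := by
        apply div_nonneg <;> linarith
      have h1θ : 0 ≤ 1 - θ := by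
        rw [hθ_def]
        rw [sub_nonneg, div_le_one (by linarith)]
        linarith
      have hexp2 : (2:ℝ)/3 * (1 - θ) = (p - 2) / p := by
        rw [hθ_def]
        field_simp
        ring
      have hexp3 : (1:ℝ)/3 * (1 - θ) = (p - 2) / (2 * p) := by
        rw [hθ_def]
        field_simp
        ring
      calc (eLpNorm (⇑u) (ENNReal.ofReal p) (volume : Measure (ℝ × ℝ))).toReal
          ≤ N2 ^ θ * N6 ^ (1 - θ) := hi
        _ ≤ N2 ^ θ * ((16:ℝ) ^ ((1:ℝ)/6) * M2 ^ ((2:ℝ)/3) * M3 ^ ((1:ℝ)/3)) ^ (1 - θ) :=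
            mul_le_mul_of_nonneg_left (Real.rpow_le_rpow hN6nn hl6 h1θ)
              (Real.rpow_nonneg hN2nn _)
        _ = N2 ^ θ * ((16:ℝ) ^ ((1:ℝ)/6 * (1 - θ)) * M2 ^ ((p - 2)/p) * M3 ^ ((p - 2)/(2*p))) := by
            rw [Real.mul_rpow (by positivity) (Real.rpow_nonneg hM3nn _),
              Real.mul_rpow (by positivity) (Real.rpow_nonneg hM2nn _),
              ← Real.rpow_mul (by norm_num : (0:ℝ) ≤ 16),
              ← Real.rpow_mul hM2nn, ← Real.rpow_mul hM3nn, hexp2, hexp3]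
        _ ≤ N2 ^ θ * (2 * M2 ^ ((p - 2)/p) * M3 ^ ((p - 2)/(2*p))) := by
            have h16' : (16:ℝ) ^ ((1:ℝ)/6 * (1 - θ)) ≤ 2 := by
              calc (16:ℝ) ^ ((1:ℝ)/6 * (1 - θ)) ≤ (16:ℝ) ^ ((1:ℝ)/6) :=
                    Real.rpow_le_rpow_of_exponent_le (by norm_num) (by nlinarith)
                _ ≤ 2 := h16
            apply mul_le_mul_of_nonneg_left _ (Real.rpow_nonneg hN2nn _)
            exact mul_le_mul_of_nonneg_right
              (mul_le_mul_of_nonneg_right h16' (Real.rpow_nonneg hM2nn ((p - 2)/p)))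
              (Real.rpow_nonneg hM3nn ((p - 2)/(2*p)))
        _ = 2 * N2 ^ θ * M2 ^ ((p - 2)/p) * M3 ^ ((p - 2)/(2*p)) := by ring
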